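/- With the notation below, for every integer a one has: U₂(a) = 4D²(−c)^a + ε̄·ε^{2a} + ε·ε̄^{2a} if n = 2, and U₂(a) = n²D²(−c)^a + (n(n−1)/2)·D²·(ε^{2a} + ε̄^{2a}) if n ≥ 3. -/

import Mathlib

open Polynomial IntermediateField


private lemma aux_multiset_eq {ι : Type*} [Fintype ι] (e : ι → ℂ) (P : ℂ[X]) (hP : P ≠ 0)
    (hinj : Function.Injective e) (hroot : ∀ i, P.IsRoot (e i))
    (hcard : Multiset.card P.roots ≤ Fintype.card ι) :
    Finset.univ.val.map e = P.roots := by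
  apply Multiset.eq_of_le_of_card_le
  · rw [Multiset.le_iff_subset (Finset.univ.nodup.map hinj)]
    intro x hx
    obtain ⟨i, _, rfl⟩ := Multiset.mem_map.1 hx
    exact (mem_roots hP).2 (hroot i)
  · simpa using hcard

private lemma aux_class_prod (n : ℕ) (hn : 0 < n) (w D x e : ℂ) (he : e ≠ 0) :
    (((X^n - C w : ℂ[X]).roots).map (fun z => x - (D + z) * e)).prod
      = (x - D*e)^n - e^n * w := by
  set g : ℂ[X] := X^n - C w with hg
  have hgm : g.Monic := monic_X_pow_sub_C _ (by omega)
  have hcard : Multiset.card g.roots = n := by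
    rw [splits_iff_card_roots.1 (IsAlgClosed.splits g), hg, natDegree_X_pow_sub_C]
  set y : ℂ := (x - D*e)/e with hy
  have hxy : ∀ z ∈ g.roots, x - (D + z) * e = e * (y - z) := by
    intro z _; rw [hy, mul_sub, mul_div_cancel₀ _ he]; ring
  rw [Multiset.map_congr rfl hxy]
  have h1 : (g.roots.map (fun z => e * (y - z))).prod
      = e^n * (g.roots.map (fun z => y - z)).prod := by
    rw [← hcard]
    induction g.roots using Multiset.induction with
    | empty => simp
    | cons a s ih => simp [ih]; ring
  rw [h1]
  have hev : (g.roots.map (fun z => y - z)).prod = y^n - w := by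
    have hsplit := (IsAlgClosed.splits g).eq_prod_roots_of_monic hgm
    have h2 := congrArg (eval y) hsplit
    rw [eval_multiset_prod] at h2
    simp only [Multiset.map_map, Function.comp, eval_sub, eval_X, eval_C] at h2 ⊢
    rw [← h2, hg]; simp
  rw [hev, mul_sub, ← mul_pow]
  have h3 : e * y = x - D*e := by rw [hy, mul_div_cancel₀ _ he]
  rw [h3]

private lemma aux_q_coeff (n : ℕ) (hn : 2 ≤ n) (f : ℕ → ℂ) :
    (∑ h ∈ Finset.range (2*n+1), C ((-1)^h * f h) * X^(2*n-h)).coeff (2*n-2)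
      = f 2 := by
  rw [finset_sum_coeff, Finset.sum_eq_single 2]
  · simp [coeff_C_mul, coeff_X_pow]
  · intro h _ hne
    rw [coeff_C_mul, coeff_X_pow, if_neg (by omega), mul_zero]
  · intro h; exact absurd (by simp; omega) h

private lemma aux_coeff_A (n : ℕ) (hn : 3 ≤ n) (u w : ℂ) :
    ((X - C u)^n + C w).coeff n = 1 ∧
    ((X - C u)^n + C w).coeff (n-1) = -(u * n) ∧
    ((X - C u)^n + C w).coeff (n-2) = u^2 * (n.choose 2 : ℂ) := by
  have hrw : (X - C u) = X + C (-u) := by rw [map_neg, sub_eq_add_neg]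
  rw [hrw]
  refine ⟨?_, ?_, ?_⟩
  · rw [coeff_add, coeff_X_add_C_pow, coeff_C, if_neg (by omega)]
    simp
  · rw [coeff_add, coeff_X_add_C_pow, coeff_C, if_neg (by omega),
      show n - 1 = n - 1 from rfl, Nat.choose_symm (by omega : 1 ≤ n),
      show n - (n-1) = 1 by omega]
    simp
  · rw [coeff_add, coeff_X_add_C_pow, coeff_C, if_neg (by omega),
      Nat.choose_symm (by omega : 2 ≤ n), show n - (n-2) = 2 by omega]
    simp

private lemma aux_AB_coeff (n : ℕ) (hn : 3 ≤ n) (u v w₁ w₂ : ℂ) :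
    (((X - C u)^n + C w₁) * ((X - C v)^n + C w₂)).coeff (2*n - 2)
      = (n.choose 2 : ℂ) * (u^2 + v^2) + (n:ℂ)^2 * (u*v) := by
  obtain ⟨hA2, hA1, hA0⟩ := aux_coeff_A n hn u w₁
  obtain ⟨hB2, hB1, hB0⟩ := aux_coeff_A n hn v w₂
  have hAdeg : ((X - C u)^n + C w₁).natDegree ≤ n := by
    refine (natDegree_add_le _ _).trans ?_
    simp [natDegree_pow, natDegree_X_sub_C]
  have hBdeg : ((X - C v)^n + C w₂).natDegree ≤ n := by
    refine (natDegree_add_le _ _).trans ?_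
    simp [natDegree_pow, natDegree_X_sub_C]
  rw [coeff_mul]
  rw [← Finset.sum_subset
    (show ({(n-2, n), (n-1, n-1), (n, n-2)} : Finset (ℕ×ℕ)) ⊆ Finset.HasAntidiagonal.antidiagonal (2*n-2)
      from ?_) ?_]
  · rw [Finset.sum_insert (by simp; omega), Finset.sum_insert (by simp; omega),
      Finset.sum_singleton]
    rw [hA0, hA1, hB1, hB2, hB0, hA2]
    ring
  · intro p hp
    simp only [Finset.mem_insert, Finset.mem_singleton] at hp
    rcases hp with rfl | rfl | rfl <;> simp [Finset.mem_antidiagonal] <;> omega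
  · intro p hp hnot
    simp only [Finset.HasAntidiagonal.mem_antidiagonal] at hp
    simp only [Finset.mem_insert, Finset.mem_singleton] at hnot
    rcases lt_or_ge n p.1 with h | h
    · rw [coeff_eq_zero_of_natDegree_lt (lt_of_le_of_lt hAdeg h), zero_mul]
    · rcases lt_or_ge n p.2 with h2 | h2
      · rw [coeff_eq_zero_of_natDegree_lt (lt_of_le_of_lt hBdeg h2), mul_zero]
      · exfalso
        apply hnot
        have hpp : p = (p.1, p.2) := rfl
        rcases (show p.1 = n-2 ∨ p.1 = n-1 ∨ p.1 = n by omega) with h1 | h1 | h1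
        · exact Or.inl (by rw [hpp, h1]; exact Prod.ext rfl (by omega))
        · exact Or.inr (Or.inl (by rw [hpp, h1]; exact Prod.ext rfl (by omega)))
        · exact Or.inr (Or.inr (by rw [hpp, h1]; exact Prod.ext rfl (by omega)))

private lemma aux_coeff_A2 (u w : ℂ) :
    ((X - C u)^2 + C w).coeff 2 = 1 ∧
    ((X - C u)^2 + C w).coeff 1 = -(2*u) ∧
    ((X - C u)^2 + C w).coeff 0 = u^2 + w := by
  have hrw : (X - C u) = X + C (-u) := by rw [map_neg, sub_eq_add_neg]
  rw [hrw]
  refine ⟨?_, ?_, ?_⟩ <;>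
    rw [coeff_add, coeff_X_add_C_pow, coeff_C] <;> simp <;> ring

private lemma aux_AB_coeff2 (u v w₁ w₂ : ℂ) :
    (((X - C u)^2 + C w₁) * ((X - C v)^2 + C w₂)).coeff 2
      = (u^2 + w₁) + (v^2 + w₂) + 4*(u*v) := by
  obtain ⟨hA2, hA1, hA0⟩ := aux_coeff_A2 u w₁
  obtain ⟨hB2, hB1, hB0⟩ := aux_coeff_A2 v w₂
  rw [coeff_mul, Finset.Nat.sum_antidiagonal_eq_sum_range_succ_mk]
  rw [Finset.sum_range_succ, Finset.sum_range_succ, Finset.sum_range_one]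
  norm_num [hA2, hA1, hA0, hB2, hB1, hB0]
  ring

set_option maxHeartbeats 1000000 in
/-- With the Bernstein–Hasse notation, for every integer `a`:
`U₂(a) = 4D²(-c)^a + ε̄ ε^{2a} + ε ε̄^{2a}` if `n = 2`, and
`U₂(a) = n²D²(-c)^a + (n(n-1)/2) D² (ε^{2a} + ε̄^{2a})` if `n ≥ 3`. -/
theorem stmt_9
    (D n : ℕ) (hD : 0 < D) (hn : 2 ≤ n) (c : ℤ) (hc : c = 1 ∨ c = -1)
    (hbig : 1 < (D : ℤ) ^ (2 * n) + c)
    (ω : ℝ) (hω : 1 < ω) (hωpow : ω ^ (2 * n) = (D : ℝ) ^ (2 * n) + (c : ℝ))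
    (hdeg : (minpoly ℚ ((ω : ℂ))).natDegree = 2 * n)
    (K : IntermediateField ℚ ℂ) (hK : K = IntermediateField.adjoin ℚ {(ω : ℂ)})
    [FiniteDimensional ℚ K]
    (hmem : ∀ a : ℤ, ((D : ℂ) + (ω : ℂ)) * ((D : ℂ) ^ n + (ω : ℂ) ^ n) ^ a ∈ K)
    (U : ℕ → ℤ → ℂ)
    (hU : ∀ (a : ℤ) (X Y : ℂ),
      (∏ φ : K →ₐ[ℚ] ℂ,
          (X - φ ⟨((D : ℂ) + (ω : ℂ)) * ((D : ℂ) ^ n + (ω : ℂ) ^ n) ^ a, hmem a⟩ * Y))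
        = ∑ h ∈ Finset.range (2 * n + 1), (-1) ^ h * U h a * X ^ (2 * n - h) * Y ^ h)
    :
    (n = 2 → ∀ a : ℤ,
      U 2 a = 4 * (D : ℂ) ^ 2 * (-(c : ℂ)) ^ a
        + ((D : ℂ) ^ n - (ω : ℂ) ^ n) * ((D : ℂ) ^ n + (ω : ℂ) ^ n) ^ (2 * a)
        + ((D : ℂ) ^ n + (ω : ℂ) ^ n) * ((D : ℂ) ^ n - (ω : ℂ) ^ n) ^ (2 * a)) ∧
    (3 ≤ n → ∀ a : ℤ,
      U 2 a = (n : ℂ) ^ 2 * (D : ℂ) ^ 2 * (-(c : ℂ)) ^ a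
        + ((n : ℂ) * ((n : ℂ) - 1) / 2) * (D : ℂ) ^ 2 *
          (((D : ℂ) ^ n + (ω : ℂ) ^ n) ^ (2 * a)
            + ((D : ℂ) ^ n - (ω : ℂ) ^ n) ^ (2 * a))) := by
  have hω0 : (0:ℝ) < ω := lt_trans one_pos hω
  have hn0 : 0 < n := by omega
  have hωc2n : ((ω:ℂ))^(2*n) = (D:ℂ)^(2*n) + (c:ℂ) := by
    have h := congrArg (Complex.ofReal) hωpow
    push_cast at h; exact h
  set ωc : ℂ := ((ω:ℝ) : ℂ) with hωcdef
  set εc : ℂ := (D:ℂ)^n + ωc^n with hεcdef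
  set δc : ℂ := (D:ℂ)^n - ωc^n with hδcdef
  have hpow2 : ∀ z : ℂ, (z^n)^2 = z^(2*n) := fun z => by rw [← pow_mul, mul_comm]
  have hmulεδ : εc * δc = -(c:ℂ) := by
    have h : εc * δc = ((D:ℂ)^n)^2 - (ωc^n)^2 := by rw [hεcdef, hδcdef]; ring
    rw [h, hpow2, hpow2, hωc2n]; ring
  have hεne : εc ≠ 0 := by
    have h : εc = (((D:ℝ)^n + ω^n : ℝ) : ℂ) := by rw [hεcdef]; push_cast; ring
    rw [h, Complex.ofReal_ne_zero]
    have h1 : (0:ℝ) < ω^n := pow_pos hω0 n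
    have h2 : (0:ℝ) ≤ (D:ℝ)^n := pow_nonneg (Nat.cast_nonneg D) n
    nlinarith
  have hδne : δc ≠ 0 := by
    intro h; rw [h, mul_zero] at hmulεδ
    rcases hc with rfl | rfl <;> norm_num at hmulεδ
  -- minimal polynomial facts
  set q : ℚ := (D:ℚ)^(2*n) + (c:ℚ) with hqdef
  have hqC : ((q:ℚ):ℂ) = (D:ℂ)^(2*n) + (c:ℂ) := by rw [hqdef]; push_cast; ring
  have hz : ωc^(2*n) = (q:ℂ) := by rw [hqC]; exact hωc2n
  have hm : ((X:ℚ[X])^(2*n) - C q).Monic := monic_X_pow_sub_C _ (by omega)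
  have hz0 : (Polynomial.aeval ωc) ((X:ℚ[X])^(2*n) - C q) = 0 := by
    simp [hz]
  have hint : IsIntegral ℚ ωc := ⟨_, hm, hz0⟩
  subst hK
  have hωmem : ωc ∈ adjoin ℚ {ωc} := subset_adjoin ℚ {ωc} rfl
  set ωK : adjoin ℚ {ωc} := ⟨ωc, hωmem⟩ with hωKdef
  have hfinrank : Module.finrank ℚ (adjoin ℚ {ωc}) = 2*n := by
    rw [show (adjoin ℚ {ωc} : IntermediateField ℚ ℂ) = ℚ⟮ωc⟯ from rfl,
      IntermediateField.adjoin.finrank hint, hdeg]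
  have hcardHom : Fintype.card ((adjoin ℚ {ωc} : IntermediateField ℚ ℂ) →ₐ[ℚ] ℂ) = 2*n := by
    rw [AlgHom.card]; exact hfinrank
  have hinj : Function.Injective
      (fun φ : (adjoin ℚ {ωc} : IntermediateField ℚ ℂ) →ₐ[ℚ] ℂ => φ ωK) := by
    intro φ ψ h
    apply IntermediateField.adjoin_algHom_ext ℚ
    intro x hx
    rcases Set.mem_singleton_iff.1 hx with rfl
    exact h
  have hroot2n : ∀ φ : (adjoin ℚ {ωc} : IntermediateField ℚ ℂ) →ₐ[ℚ] ℂ,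
      (φ ωK)^(2*n) = ωc^(2*n) := by
    intro φ
    have h1 : ωK ^ (2*n) = algebraMap ℚ (adjoin ℚ {ωc}) q := by
      apply Subtype.ext
      have h2 : ((algebraMap ℚ (adjoin ℚ {ωc}) q : adjoin ℚ {ωc}) : ℂ) = (q : ℂ) := by
        simp [IntermediateField.algebraMap_apply]
      rw [h2]
      push_cast
      exact hz
    rw [← map_pow, h1, AlgHom.commutes]
    simp [hz]
  set P : ℂ[X] := X^(2*n) - C (ωc^(2*n)) with hPdef
  have hPm : P.Monic := monic_X_pow_sub_C _ (by omega)
  have hProots_card : Multiset.card P.roots = 2*n := by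
    rw [splits_iff_card_roots.1 (IsAlgClosed.splits P), hPdef, natDegree_X_pow_sub_C]
  have hE := aux_multiset_eq (fun φ : (adjoin ℚ {ωc} : IntermediateField ℚ ℂ) →ₐ[ℚ] ℂ => φ ωK)
      P hPm.ne_zero hinj
      (fun φ => by
        show P.IsRoot _
        rw [hPdef, IsRoot, eval_sub, eval_pow, eval_X, eval_C, hroot2n φ, sub_self])
      (by rw [hProots_card, hcardHom])
  have hPsplit : P = (X^n - C (ωc^n)) * (X^n - C (-(ωc^n))) := by
    rw [hPdef, show 2*n = n*2 from mul_comm 2 n, pow_mul,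
      show ωc^(n*2) = (ωc^n)^2 from by rw [← pow_mul], C_pow, map_neg, sub_neg_eq_add]
    rw [sq_sub_sq]; ring
  -- the key identity
  have key : ∀ a : ℤ, U 2 a =
      (((X - C ((D:ℂ)*εc^a))^n + C (-((εc^a)^n * ωc^n))) *
       ((X - C ((D:ℂ)*δc^a))^n + C ((δc^a)^n * ωc^n))).coeff (2*n-2) := by
    intro a
    have hval : ∀ φ : (adjoin ℚ {ωc} : IntermediateField ℚ ℂ) →ₐ[ℚ] ℂ,
        φ ⟨((D:ℂ) + ωc) * ((D:ℂ)^n + ωc^n)^a, hmem a⟩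
          = ((D:ℂ) + φ ωK) * ((D:ℂ)^n + (φ ωK)^n)^a := by
      intro φ
      have he : (⟨((D:ℂ) + ωc) * ((D:ℂ)^n + ωc^n)^a, hmem a⟩ : adjoin ℚ {ωc})
          = ((D : adjoin ℚ {ωc}) + ωK) * ((D : adjoin ℚ {ωc})^n + ωK^n)^a := by
        apply Subtype.ext
        push_cast
        rfl
      rw [he, map_mul, map_zpow₀]
      simp only [map_add, map_pow, map_natCast]
    have hfun : ∀ x : ℂ,
        (∑ h ∈ Finset.range (2*n+1), (-1)^h * U h a * x^(2*n-h))
        = ((x - (D:ℂ)*εc^a)^n + (-((εc^a)^n * ωc^n)))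
          * ((x - (D:ℂ)*δc^a)^n + ((δc^a)^n * ωc^n)) := by
      intro x
      have h1 := hU a x 1
      simp only [mul_one, one_pow] at h1
      rw [← h1]
      have hstep1 : (∏ φ : (adjoin ℚ {ωc} : IntermediateField ℚ ℂ) →ₐ[ℚ] ℂ,
          (x - φ ⟨((D:ℂ) + ωc) * ((D:ℂ)^n + ωc^n)^a, hmem a⟩))
          = (P.roots.map (fun z => x - ((D:ℂ) + z) * ((D:ℂ)^n + z^n)^a)).prod := by
        rw [← hE, Multiset.map_map]
        rw [Finset.prod]
        apply congrArg
        apply Multiset.map_congr rfl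
        intro φ _
        rw [Function.comp_apply, hval φ]
      rw [hstep1, hPsplit, roots_mul (mul_ne_zero (monic_X_pow_sub_C _ (by omega)).ne_zero
          (monic_X_pow_sub_C _ (by omega)).ne_zero),
        Multiset.map_add, Multiset.prod_add]
      have hc1 : ∀ z ∈ ((X:ℂ[X])^n - C (ωc^n)).roots,
          x - ((D:ℂ) + z) * ((D:ℂ)^n + z^n)^a = x - ((D:ℂ) + z) * εc^a := by
        intro z hzr
        have hz2 : z^n = ωc^n := by
          have := (mem_roots (monic_X_pow_sub_C _ (by omega : n ≠ 0)).ne_zero).1 hzr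
          rw [IsRoot, eval_sub, eval_pow, eval_X, eval_C, sub_eq_zero] at this
          exact this
        rw [hz2, ← hεcdef]
      have hc2 : ∀ z ∈ ((X:ℂ[X])^n - C (-(ωc^n))).roots,
          x - ((D:ℂ) + z) * ((D:ℂ)^n + z^n)^a = x - ((D:ℂ) + z) * δc^a := by
        intro z hzr
        have hz2 : z^n = -(ωc^n) := by
          have := (mem_roots (monic_X_pow_sub_C _ (by omega : n ≠ 0)).ne_zero).1 hzr
          rw [IsRoot, eval_sub, eval_pow, eval_X, eval_C, sub_eq_zero] at this
          exact this
        rw [hz2, show (D:ℂ)^n + -(ωc^n) = δc from by rw [hδcdef]; ring]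
      rw [Multiset.map_congr rfl hc1, Multiset.map_congr rfl hc2,
        aux_class_prod n hn0 (ωc^n) (D:ℂ) x (εc^a) (zpow_ne_zero a hεne),
        aux_class_prod n hn0 (-(ωc^n)) (D:ℂ) x (δc^a) (zpow_ne_zero a hδne)]
      ring
    have hpoly : (∑ h ∈ Finset.range (2*n+1), C ((-1)^h * U h a) * X^(2*n-h) : ℂ[X])
        = ((X - C ((D:ℂ)*εc^a))^n + C (-((εc^a)^n * ωc^n))) *
          ((X - C ((D:ℂ)*δc^a))^n + C ((δc^a)^n * ωc^n)) := by
      apply Polynomial.funext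
      intro x
      rw [eval_mul, eval_finset_sum]
      simp only [eval_mul, eval_pow, eval_add, eval_sub, eval_X, eval_C, eval_neg]
      rw [hfun x]
    have hco := congrArg (fun p : ℂ[X] => p.coeff (2*n-2)) hpoly
    rw [aux_q_coeff n hn (fun h => U h a)] at hco
    exact hco
  constructor
  · rintro rfl a
    rw [key a, show 2*2-2 = 2 by norm_num, aux_AB_coeff2]
    have hsqε : (εc^a)^(2:ℕ) = εc^(2*a) := by
      rw [← zpow_natCast (εc^a) 2, ← zpow_mul, mul_comm]; norm_num
    have hsqδ : (δc^a)^(2:ℕ) = δc^(2*a) := by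
      rw [← zpow_natCast (δc^a) 2, ← zpow_mul, mul_comm]; norm_num
    have huv : εc^a * δc^a = (-(c:ℂ))^a := by rw [← mul_zpow, hmulεδ]
    linear_combination δc * hsqε + εc * hsqδ + 4*(D:ℂ)^2 * huv
  · intro hn3 a
    rw [key a, aux_AB_coeff n hn3, Nat.cast_choose_two]
    have hsqε : (εc^a)^(2:ℕ) = εc^(2*a) := by
      rw [← zpow_natCast (εc^a) 2, ← zpow_mul, mul_comm]; norm_num
    have hsqδ : (δc^a)^(2:ℕ) = δc^(2*a) := by
      rw [← zpow_natCast (δc^a) 2, ← zpow_mul, mul_comm]; norm_num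
    have huv : εc^a * δc^a = (-(c:ℂ))^a := by rw [← mul_zpow, hmulεδ]
    linear_combination ((n:ℂ)*((n:ℂ)-1)/2)*(D:ℂ)^2 * hsqε
      + ((n:ℂ)*((n:ℂ)-1)/2)*(D:ℂ)^2 * hsqδ + (n:ℂ)^2*(D:ℂ)^2 * huv
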